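/- Let F = (f_1,…,f_N) be a uniform tight frame with bound A > 0 for an n-dimensional complex inner product space H such that |⟨f_i,f_j⟩| is the same for all pairs i ≠ j, and let p > 1. If G = (g_1,…,g_N) is a dual frame of F with ((1/N)∑_{i=1}^N (‖f_i‖·‖g_i‖)^p)^{1/p} = n/N, then g_i = f_i/A for all i; that is, the canonical dual S_F^{-1}F is the unique dual frame of F attaining the minimal 1-erasure Frobenius average error n/N. -/

import Mathlib

open scoped ComplexInnerProductSpace

/-- Let `F = (f₁,…,f_N)` be a uniform tight frame with bound
`A > 0` for an `n`-dimensional complex inner product space `H` such that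
`|⟨f i, f j⟩|` is the same for all pairs `i ≠ j`, and let `p > 1`.  If `G` is a
dual frame of `F` with `((1/N) ∑ i, (‖f i‖·‖g i‖)^p)^(1/p) = n/N`, then
`g i = f i / A` for all `i`; i.e. the canonical dual is the unique dual frame
attaining the minimal `1`-erasure Frobenius average error `n/N`. -/
theorem stmt_9 {H : Type*} [NormedAddCommGroup H] [InnerProductSpace ℂ H]
    [FiniteDimensional ℂ H] (n N : ℕ) (hn : Module.finrank ℂ H = n)
    (f : Fin N → H) (A : ℝ) (hA : 0 < A)
    (htight : ∀ x : H, ∑ i, ‖⟪f i, x⟫‖ ^ 2 = A * ‖x‖ ^ 2)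
    (huniform : ∀ i j, ‖f i‖ = ‖f j‖)
    (hequi : ∃ c : ℝ, ∀ i j, i ≠ j → ‖⟪f i, f j⟫‖ = c)
    (p : ℝ) (hp : 1 < p)
    (g : Fin N → H)
    (hdual : ∀ x : H, x = ∑ i, ⟪f i, x⟫ • g i)
    (hopt : ((1 / (N : ℝ)) * ∑ i, (‖f i‖ * ‖g i‖) ^ p) ^ (1 / p) = (n : ℝ) / N) :
    ∀ i, g i = (A : ℂ)⁻¹ • f i := by
  intro i0
  rcases Nat.eq_zero_or_pos n with hn0 | hnpos
  · have : Subsingleton H := Module.finrank_zero_iff.mp (hn0 ▸ hn)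
    exact Subsingleton.elim _ _
  have hN : 0 < N := i0.pos
  have hNR : (0:ℝ) < N := by exact_mod_cast hN
  set b := stdOrthonormalBasis ℂ H with hb
  have hcard : Fintype.card (Fin (Module.finrank ℂ H)) = n := by simp [hn]
  -- Parseval
  have hxx : ∀ x : H, ∑ k, ‖⟪b k, x⟫‖ ^ 2 = ‖x‖ ^ 2 := by
    intro x
    have h1 := b.sum_inner_mul_inner x x
    have h2 : ∀ k, ⟪x, b k⟫ * ⟪b k, x⟫ = ((‖⟪b k, x⟫‖ ^ 2 : ℝ) : ℂ) := by
      intro k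
      rw [← inner_conj_symm (b k) x, Complex.mul_conj]
      norm_cast
      rw [← Complex.normSq_conj, ← Complex.sq_norm, Complex.norm_conj]
    rw [funext h2, inner_self_eq_norm_sq_to_K] at h1
    refine Complex.ofReal_injective ?_
    push_cast at h1 ⊢
    exact h1
  -- norms of frame vectors
  have hsumf : ∑ i, ‖f i‖ ^ 2 = A * n := by
    calc ∑ i, ‖f i‖ ^ 2 = ∑ i, ∑ k, ‖⟪b k, f i⟫‖ ^ 2 := by
          exact Finset.sum_congr rfl fun i _ => (hxx (f i)).symm
      _ = ∑ k, ∑ i, ‖⟪f i, b k⟫‖ ^ 2 := by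
          rw [Finset.sum_comm]
          exact Finset.sum_congr rfl fun k _ => Finset.sum_congr rfl fun i _ => by
            rw [norm_inner_symm]
      _ = ∑ k : Fin (Module.finrank ℂ H), A := by
          exact Finset.sum_congr rfl fun k _ => by
            rw [htight (b k), b.orthonormal.1 k]; ring
      _ = A * n := by
          rw [Finset.sum_const, Finset.card_univ, hcard, nsmul_eq_mul, mul_comm]
  have hfsq : ∀ i, ‖f i‖ ^ 2 = A * n / N := by
    intro i
    have : ∑ j, ‖f j‖ ^ 2 = N * ‖f i‖ ^ 2 := by
      rw [Finset.sum_congr rfl fun j _ => by rw [huniform j i]]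
      simp [mul_comm]
    have := this ▸ hsumf
    field_simp at this ⊢
    linarith
  have hfpos : ∀ i, 0 < ‖f i‖ := by
    intro i
    have h2 : 0 < ‖f i‖ ^ 2 := by rw [hfsq i]; positivity
    have : ‖f i‖ ≠ 0 := fun h => by rw [h] at h2; simp at h2
    exact lt_of_le_of_ne (norm_nonneg _) (Ne.symm this)
  -- trace identity
  have htrace : ∑ i, ⟪f i, g i⟫ = (n : ℂ) := by
    calc ∑ i, ⟪f i, g i⟫ = ∑ i, ∑ k, ⟪f i, b k⟫ * ⟪b k, g i⟫ :=
          Finset.sum_congr rfl fun i _ => (b.sum_inner_mul_inner (f i) (g i)).symm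
      _ = ∑ k, ∑ i, ⟪f i, b k⟫ * ⟪b k, g i⟫ := Finset.sum_comm
      _ = ∑ k, ⟪b k, ∑ i, ⟪f i, b k⟫ • g i⟫ := by
          exact Finset.sum_congr rfl fun k _ => by
            rw [inner_sum]
            exact Finset.sum_congr rfl fun i _ => by rw [inner_smul_right]
      _ = ∑ k : Fin (Module.finrank ℂ H), ⟪b k, b k⟫ := by
          exact Finset.sum_congr rfl fun k _ => by rw [← hdual (b k)]
      _ = (n : ℂ) := by
          simp [inner_self_eq_norm_sq_to_K, b.orthonormal.1, hcard]
  -- error quantity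
  set a : Fin N → ℝ := fun i => ‖f i‖ * ‖g i‖ with ha
  have ha0 : ∀ i, 0 ≤ a i := fun i => mul_nonneg (norm_nonneg _) (norm_nonneg _)
  have hre : ∀ i, (⟪f i, g i⟫).re ≤ a i := fun i =>
    le_trans (Complex.re_le_norm _)
      (le_trans (le_of_eq rfl) (norm_inner_le_norm _ _))
  have hsumre : ∑ i, (⟪f i, g i⟫).re = (n : ℝ) := by
    have := congrArg Complex.re htrace
    simpa using this
  have hnsum : (n : ℝ) ≤ ∑ i, a i :=
    hsumre ▸ Finset.sum_le_sum fun i _ => hre i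
  -- Jensen
  have hppos : 0 < p := lt_trans one_pos hp
  set w : Fin N → ℝ := fun _ => 1 / N with hw
  have hw0 : ∀ i ∈ Finset.univ, (0:ℝ) ≤ w i := fun i _ => by positivity
  have hw1 : ∑ i : Fin N, w i = 1 := by
    simp [hw, Finset.sum_const]
    field_simp
  have hX : (1 / (N:ℝ)) * ∑ i, a i ^ p = ((n:ℝ)/N) ^ p := by
    have h0 : (0:ℝ) ≤ (1 / (N:ℝ)) * ∑ i, a i ^ p := by
      apply mul_nonneg (by positivity)
      exact Finset.sum_nonneg fun i _ => Real.rpow_nonneg (ha0 i) p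
    have hpc : (1/p) * p = 1 := one_div_mul_cancel hppos.ne'
    calc (1 / (N:ℝ)) * ∑ i, a i ^ p
        = ((1 / (N:ℝ)) * ∑ i, a i ^ p) ^ ((1/p) * p) := by
          rw [hpc, Real.rpow_one]
      _ = (((1 / (N:ℝ)) * ∑ i, a i ^ p) ^ (1/p)) ^ p := Real.rpow_mul h0 _ _
      _ = ((n:ℝ)/N) ^ p := by rw [hopt]
  have hjensen : (∑ i, w i * a i) ^ p ≤ ∑ i, w i * a i ^ p :=
    Real.rpow_arith_mean_le_arith_mean_rpow Finset.univ w a hw0 hw1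
      (fun i _ => ha0 i) hp.le
  have hwa : ∑ i, w i * a i = (1/(N:ℝ)) * ∑ i, a i := by
    rw [Finset.mul_sum]
  have hwap : ∑ i, w i * a i ^ p = ((n:ℝ)/N) ^ p := by
    rw [← hX, Finset.mul_sum]
  have hmle : (1/(N:ℝ)) * ∑ i, a i ≤ (n:ℝ)/N := by
    by_contra hlt
    push_neg at hlt
    have := Real.rpow_lt_rpow (by positivity) hlt hppos
    rw [← hwa] at this
    exact absurd (lt_of_lt_of_le this hjensen) (not_lt.mpr (le_of_eq hwap))
  have hsuma : ∑ i, a i = (n:ℝ) := by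
    have h1 : ∑ i, a i ≤ (n:ℝ) := by
      have := mul_le_mul_of_nonneg_left hmle (le_of_lt hNR)
      rw [← mul_assoc] at this
      field_simp at this
      linarith
    linarith
  -- pointwise equality of re and a
  have hpt : ∀ i ∈ Finset.univ, (⟪f i, g i⟫).re = a i := by
    have := (Finset.sum_eq_sum_iff_of_le (fun i (_ : i ∈ Finset.univ) => hre i)).mp
      (by rw [hsumre, hsuma])
    exact this
  -- all a i equal, hence = n/N
  have haeq : ∀ i, a i = (n:ℝ)/N := by
    have hmean : ∑ i, w i * a i = (n:ℝ)/N := by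
      rw [hwa, hsuma]; field_simp
    have hconv := strictConvexOn_rpow hp
    have hkey : ∀ j ∈ Finset.univ, ∀ k ∈ Finset.univ, a j = a k := by
      apply hconv.eq_of_le_map_sum (w := w) (p := a)
        (fun i _ => by positivity) hw1 (fun i _ => Set.mem_Ici.mpr (ha0 i))
      simp only [smul_eq_mul]
      rw [hwap, hmean]
    intro i
    have : ∑ j, a j = ∑ j : Fin N, a i :=
      Finset.sum_congr rfl fun j _ => hkey j (Finset.mem_univ _) i (Finset.mem_univ _)
    rw [hsuma, Finset.sum_const, Finset.card_univ, Fintype.card_fin, nsmul_eq_mul] at this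
    field_simp
    linarith [this]
  -- conclude
  have hrei : (⟪f i0, g i0⟫).re = ‖f i0‖ * ‖g i0‖ := hpt i0 (Finset.mem_univ _)
  have habs : ‖⟪f i0, g i0⟫‖ = (⟪f i0, g i0⟫).re := by
    refine le_antisymm ?_ (Complex.re_le_norm _)
    rw [hrei]
    exact norm_inner_le_norm _ _
  have him : (⟪f i0, g i0⟫).im = 0 := by
    have h1 := Complex.sq_norm ⟪f i0, g i0⟫
    rw [habs, Complex.normSq_apply] at h1
    have h2 : ((⟪f i0, g i0⟫).im) ^ 2 = 0 := by nlinarith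
    exact pow_eq_zero_iff two_ne_zero |>.mp h2
  have hinner : ⟪f i0, g i0⟫ = ((‖f i0‖ : ℂ)) * ((‖g i0‖ : ℂ)) := by
    have hz : ⟪f i0, g i0⟫ = (((⟪f i0, g i0⟫).re : ℝ) : ℂ) := by
      apply Complex.ext <;> simp [him]
    rw [hz, hrei]
    push_cast
    ring
  have hkey := (inner_eq_norm_mul_iff (𝕜 := ℂ)).mp hinner
  have hf0 : ((‖f i0‖ : ℝ) : ℂ) ≠ 0 := by exact_mod_cast (hfpos i0).ne'
  have hkey' : (‖g i0‖ : ℂ) • f i0 = (‖f i0‖ : ℂ) • g i0 := by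
    exact_mod_cast hkey
  have hg : g i0 = (((‖f i0‖⁻¹ * ‖g i0‖ : ℝ)) : ℂ) • f i0 := by
    refine smul_right_injective H hf0 ?_
    show (‖f i0‖ : ℂ) • g i0 = (‖f i0‖ : ℂ) • ((((‖f i0‖⁻¹ * ‖g i0‖ : ℝ)) : ℂ) • f i0)
    rw [← hkey', smul_smul]
    congr 1
    norm_cast
    field_simp
    rw [mul_div_cancel_right₀ _ (hfpos i0).ne']
  have hscal : ‖f i0‖⁻¹ * ‖g i0‖ = A⁻¹ := by
    have h1 : ‖f i0‖ * ‖g i0‖ = (n : ℝ) / N := haeq i0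
    have h2 : ‖f i0‖ ^ 2 = A * n / N := hfsq i0
    have h3 : 0 < ‖f i0‖ := hfpos i0
    have h6 : ‖f i0‖ * (‖f i0‖ - A * ‖g i0‖) = 0 := by
      linear_combination h2 - A * h1
    have h7 : ‖f i0‖ - A * ‖g i0‖ = 0 :=
      (mul_eq_zero.mp h6).resolve_left h3.ne'
    field_simp
    linarith
  rw [hg, hscal]
  norm_cast
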